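/- Let S be the set of lines in R² consisting of: horizontal lines y = k for k ∈ ℤ, lines of slope √3 through points (2k, 0) for k ∈ ℤ, and lines of slope -√3 through points (2k+1, 0) for k ∈ ℤ (the kagome line system). Then for every odd positive integer m and every line g ∈ S, the scaled line m·g = {m·x : x ∈ g} again belongs to S. -/

import Mathlib

open Real

/-- The kagome line system in standard position: horizontal lines `y = k` (`k ∈ ℤ`),
lines of slope `√3` through `(2k, 0)`, and lines of slope `-√3` through `(2k+1, 0)`. -/
def kagomeLines : Set (Set (ℝ × ℝ)) :=
  {g | (∃ k : ℤ, g = {p : ℝ × ℝ | p.2 = (k : ℝ)}) ∨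
       (∃ k : ℤ, g = {p : ℝ × ℝ | p.2 = Real.sqrt 3 * (p.1 - 2 * (k : ℝ))}) ∨
       (∃ k : ℤ, g = {p : ℝ × ℝ | p.2 = -Real.sqrt 3 * (p.1 - (2 * (k : ℝ) + 1))})}

/-- For every odd positive integer `m` and every line `g` of the kagome line system,
the scaled line `m·g` again belongs to the system. -/
theorem stmt_1 (m : ℤ) (hmodd : Odd m) (hmpos : 0 < m) (g : Set (ℝ × ℝ))
    (hg : g ∈ kagomeLines) :
    (fun p : ℝ × ℝ => ((m : ℝ) * p.1, (m : ℝ) * p.2)) '' g ∈ kagomeLines := by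
  have hm0 : (m : ℝ) ≠ 0 := by exact_mod_cast hmpos.ne'
  rcases hg with ⟨k, rfl⟩ | ⟨k, rfl⟩ | ⟨k, rfl⟩
  · left
    refine ⟨m * k, Set.ext fun p => ?_⟩
    constructor
    · rintro ⟨q, hq, rfl⟩
      simp only [Set.mem_setOf_eq] at hq ⊢
      push_cast
      rw [hq]
    · intro hp
      refine ⟨(p.1 / m, p.2 / m), ?_, ?_⟩
      · simp only [Set.mem_setOf_eq] at hp ⊢
        rw [hp]; push_cast; field_simp
      · simp [mul_div_cancel₀, hm0]
  · right; left
    refine ⟨m * k, Set.ext fun p => ?_⟩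
    constructor
    · rintro ⟨q, hq, rfl⟩
      simp only [Set.mem_setOf_eq] at hq ⊢
      push_cast
      rw [hq]; ring
    · intro hp
      refine ⟨(p.1 / m, p.2 / m), ?_, ?_⟩
      · simp only [Set.mem_setOf_eq] at hp ⊢
        rw [hp]; push_cast; field_simp
      · simp [mul_div_cancel₀, hm0]
  · right; right
    obtain ⟨j, hj⟩ := hmodd
    refine ⟨2 * j * k + j + k, Set.ext fun p => ?_⟩
    have key : (2 : ℝ) * ((2 * j * k + j + k : ℤ) : ℝ) + 1 = (m : ℝ) * (2 * k + 1) := by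
      push_cast [hj]; ring
    constructor
    · rintro ⟨q, hq, rfl⟩
      simp only [Set.mem_setOf_eq] at hq ⊢
      rw [key, hq]; ring
    · intro hp
      refine ⟨(p.1 / m, p.2 / m), ?_, ?_⟩
      · simp only [Set.mem_setOf_eq] at hp ⊢
        rw [hp, key]; field_simp
      · simp [mul_div_cancel₀, hm0]
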